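/- Theorem 2.1, part 2 (finiteness of the expected score as t → 0). Let π be a probability measure on Θ such that (i) the function θ ↦ Q(θ,Y) is π-integrable, and (ii) there exists M < ∞ with f(Y|θ,t) ≤ M for all t ∈ [0,1] and π-almost every θ. Then z_0 > 0, and as t → 0⁺ the expected score E_t(U) = (∫_Θ U(θ,Y,t) f(Y|θ,t) dπ(θ)) / z_t converges to the finite limit (∫_Θ U(θ,Y,0) f(Y|θ,0) dπ(θ)) / z_0; in particular lim_{t→0⁺} E_t(U) exists and is finite. -/

import Mathlib

/-!
STATEMENT 4 (Theorem 2.1, part 2): under integrability of Q and a.e. boundedness of the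
path likelihood on [0,1], z_0 > 0 and the expected score
E_t(U) = (∫ U(θ,Y,t) f(Y|θ,t) dπ(θ)) / z_t converges, as t → 0⁺, to the finite limit
(∫ U(θ,Y,0) f(Y|θ,0) dπ(θ)) / z_0.
-/

open MeasureTheory Real Filter Set

/-- The parameter space Θ of a factor model with `p` outcomes, `k+1` factors and `n`
observations: loadings Λ ∈ ℝ^{p×(k+1)}, variances σ² ∈ (0,∞)^p and latent factors
η = (η₁,…,η_n), ηᵢ ∈ ℝ^{k+1}. -/
abbrev FactorParam (p k n : ℕ) : Type :=
  Matrix (Fin p) (Fin (k + 1)) ℝ × {σ : Fin p → ℝ // ∀ j, 0 < σ j} ×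
    (Fin n → Fin (k + 1) → ℝ)

/-- Λ_t : the matrix obtained from Λ by multiplying its last column by `t` (PAMP). -/
def pathLam {p k : ℕ} (t : ℝ) (Λ : Matrix (Fin p) (Fin (k + 1)) ℝ) :
    Matrix (Fin p) (Fin (k + 1)) ℝ :=
  fun j l => if l = Fin.last k then t * Λ j l else Λ j l

/-- The factor model likelihood f(Y|θ) = ∏ᵢ∏ⱼ (2πσⱼ²)^{-1/2} exp(−(y_{ij} − (Ληᵢ)_j)²/(2σⱼ²)). -/
noncomputable def lik {p k n : ℕ} (Y : Fin n → Fin p → ℝ) (θ : FactorParam p k n) : ℝ :=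
  ∏ i : Fin n, ∏ j : Fin p,
    (2 * π * θ.2.1.1 j) ^ (-(1 : ℝ) / 2) *
      Real.exp (-(Y i j - ∑ l, θ.1 j l * θ.2.2 i l) ^ 2 / (2 * θ.2.1.1 j))

/-- The likelihood along the parametric arithmetic mean path: f(Y|θ,t) = f(Y|(Λ_t,σ²,η)). -/
noncomputable def pathLik {p k n : ℕ} (Y : Fin n → Fin p → ℝ) (θ : FactorParam p k n)
    (t : ℝ) : ℝ :=
  lik Y (pathLam t θ.1, θ.2)

/-- The score function U(θ,Y,t) = ∑ᵢ∑ⱼ (y_{ij} − (Λ_t ηᵢ)_j) σⱼ^{−2} Λ_{jk} η_{ik}. -/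
noncomputable def scoreU {p k n : ℕ} (Y : Fin n → Fin p → ℝ) (θ : FactorParam p k n)
    (t : ℝ) : ℝ :=
  ∑ i : Fin n, ∑ j : Fin p,
    (Y i j - ∑ l, pathLam t θ.1 j l * θ.2.2 i l) * (θ.2.1.1 j)⁻¹ *
      (θ.1 j (Fin.last k) * θ.2.2 i (Fin.last k))

/-- The dominating function Q(θ,Y), free of t. -/
noncomputable def Qbound {p k n : ℕ} (Y : Fin n → Fin p → ℝ) (θ : FactorParam p k n) : ℝ :=
  ∑ i : Fin n, ∑ j : Fin p,
    (|Y i j| + ∑ l, |θ.1 j l| * |θ.2.2 i l|) * (θ.2.1.1 j)⁻¹ *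
      (|θ.1 j (Fin.last k)| * |θ.2.2 i (Fin.last k)|)

/-- The Borel-type product σ-algebra on the space of loading matrices. -/
instance {p k : ℕ} : MeasurableSpace (Matrix (Fin p) (Fin (k + 1)) ℝ) :=
  MeasurableSpace.pi

-- building blocks
lemma meas_sigma {p k n : ℕ} (j : Fin p) :
    Measurable (fun θ : FactorParam p k n => θ.2.1.1 j) := by
  exact (measurable_pi_apply j).comp
    (measurable_subtype_coe.comp (measurable_fst.comp measurable_snd))

lemma meas_lam {p k n : ℕ} (j : Fin p) (l : Fin (k+1)) :
    Measurable (fun θ : FactorParam p k n => θ.1 j l) := by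
  exact (measurable_pi_apply l).comp ((measurable_pi_apply j).comp measurable_fst)

lemma meas_eta {p k n : ℕ} (i : Fin n) (l : Fin (k+1)) :
    Measurable (fun θ : FactorParam p k n => θ.2.2 i l) := by
  exact (measurable_pi_apply l).comp
    ((measurable_pi_apply i).comp (measurable_snd.comp measurable_snd))

lemma meas_pathLam {p k n : ℕ} (t : ℝ) (j : Fin p) (l : Fin (k+1)) :
    Measurable (fun θ : FactorParam p k n => pathLam t θ.1 j l) := by
  unfold pathLam
  by_cases h : l = Fin.last k <;> simp only [h, if_true, if_false]
  · exact (meas_lam j (Fin.last k)).const_mul t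
  · exact meas_lam j l

lemma meas_pathLik {p k n : ℕ} (Y : Fin n → Fin p → ℝ) (t : ℝ) :
    Measurable (fun θ : FactorParam p k n => pathLik Y θ t) := by
  unfold pathLik lik
  apply Finset.measurable_prod
  intro i _
  apply Finset.measurable_prod
  intro j _
  dsimp only
  apply Measurable.mul
  · have he : (fun θ : FactorParam p k n => (2 * π * θ.2.1.1 j) ^ (-(1:ℝ)/2))
        = fun θ => Real.exp (Real.log (2 * π * θ.2.1.1 j) * (-(1:ℝ)/2)) := by
      funext θ
      exact Real.rpow_def_of_pos (by have := θ.2.1.2 j; positivity) _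
    rw [he]
    exact Real.measurable_exp.comp
      ((Real.measurable_log.comp ((meas_sigma j).const_mul (2 * π))).mul_const _)
  · apply Real.measurable_exp.comp
    apply Measurable.div
    · apply Measurable.neg
      apply Measurable.pow
      · apply Measurable.sub measurable_const
        apply Finset.measurable_sum
        intro l _
        exact (meas_pathLam t j l).mul (meas_eta i l)
      · exact measurable_const
    · exact (meas_sigma j).const_mul 2

lemma meas_scoreU {p k n : ℕ} (Y : Fin n → Fin p → ℝ) (t : ℝ) :
    Measurable (fun θ : FactorParam p k n => scoreU Y θ t) := by
  unfold scoreU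
  apply Finset.measurable_sum
  intro i _
  apply Finset.measurable_sum
  intro j _
  refine Measurable.mul (Measurable.mul ?_ (meas_sigma j).inv)
    ((meas_lam j (Fin.last k)).mul (meas_eta i (Fin.last k)))
  apply Measurable.sub measurable_const
  apply Finset.measurable_sum
  intro l _
  exact (meas_pathLam t j l).mul (meas_eta i l)

lemma cont_pathLik {p k n : ℕ} (Y : Fin n → Fin p → ℝ) (θ : FactorParam p k n) :
    Continuous (fun t => pathLik Y θ t) := by
  unfold pathLik lik
  apply continuous_finset_prod
  intro i _
  apply continuous_finset_prod
  intro j _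
  dsimp only
  apply Continuous.mul continuous_const
  apply Real.continuous_exp.comp
  apply Continuous.div_const
  apply Continuous.neg
  apply Continuous.pow
  apply Continuous.sub continuous_const
  apply continuous_finset_sum
  intro l _
  by_cases h : l = Fin.last k <;> simp only [pathLam, h, if_true, if_false] <;> fun_prop

lemma cont_scoreU {p k n : ℕ} (Y : Fin n → Fin p → ℝ) (θ : FactorParam p k n) :
    Continuous (fun t => scoreU Y θ t) := by
  unfold scoreU
  apply continuous_finset_sum; intro i _
  apply continuous_finset_sum; intro j _
  apply Continuous.mul (Continuous.mul ?_ continuous_const) continuous_const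
  apply Continuous.sub continuous_const
  apply continuous_finset_sum
  intro l _
  by_cases h : l = Fin.last k <;> simp only [pathLam, h, if_true, if_false] <;> fun_prop

lemma pathLik_pos {p k n : ℕ} (Y : Fin n → Fin p → ℝ) (θ : FactorParam p k n) (t : ℝ) :
    0 < pathLik Y θ t := by
  unfold pathLik lik
  apply Finset.prod_pos; intro i _
  apply Finset.prod_pos; intro j _
  apply mul_pos
  · apply Real.rpow_pos_of_pos
    have := θ.2.1.2 j
    positivity
  · exact Real.exp_pos _

lemma Qbound_nonneg {p k n : ℕ} (Y : Fin n → Fin p → ℝ) (θ : FactorParam p k n) :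
    0 ≤ Qbound Y θ := by
  apply Finset.sum_nonneg; intro i _
  apply Finset.sum_nonneg; intro j _
  have hσ := θ.2.1.2 j
  have h1 : 0 ≤ |Y i j| + ∑ l, |θ.1 j l| * |θ.2.2 i l| := by positivity
  positivity

lemma abs_scoreU_le {p k n : ℕ} (Y : Fin n → Fin p → ℝ) (θ : FactorParam p k n)
    {t : ℝ} (ht : t ∈ Set.Icc (0:ℝ) 1) : |scoreU Y θ t| ≤ Qbound Y θ := by
  unfold scoreU Qbound
  refine le_trans (Finset.abs_sum_le_sum_abs _ _) (Finset.sum_le_sum fun i _ => ?_)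
  refine le_trans (Finset.abs_sum_le_sum_abs _ _) (Finset.sum_le_sum fun j _ => ?_)
  have hσ := θ.2.1.2 j
  rw [abs_mul, abs_mul, abs_mul, abs_of_pos (inv_pos.mpr hσ)]
  have hsub : |Y i j - ∑ l, pathLam t θ.1 j l * θ.2.2 i l|
      ≤ |Y i j| + ∑ l, |θ.1 j l| * |θ.2.2 i l| := by
    refine le_trans (abs_sub _ _) (add_le_add le_rfl ?_)
    refine le_trans (Finset.abs_sum_le_sum_abs _ _) (Finset.sum_le_sum fun l _ => ?_)
    rw [abs_mul]
    apply mul_le_mul_of_nonneg_right _ (abs_nonneg _)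
    by_cases h : l = Fin.last k <;> simp only [pathLam, h, if_true, if_false]
    · rw [abs_mul]
      exact mul_le_of_le_one_left (abs_nonneg _) (abs_le.mpr ⟨le_trans (by norm_num) ht.1, ht.2⟩)
    · exact le_rfl
  exact mul_le_mul_of_nonneg_right
    (mul_le_mul_of_nonneg_right hsub (by positivity)) (by positivity)

theorem expected_score_finite_limit_at_zero {p k n : ℕ} (Y : Fin n → Fin p → ℝ)
    (P : MeasureTheory.Measure (FactorParam p k n)) [MeasureTheory.IsProbabilityMeasure P]
    (hQ : MeasureTheory.Integrable (fun θ => Qbound Y θ) P)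
    (M : ℝ) (hM : ∀ᵐ θ ∂P, ∀ t ∈ Set.Icc (0 : ℝ) 1, pathLik Y θ t ≤ M) :
    0 < (∫ θ, pathLik Y θ 0 ∂P) ∧
      Filter.Tendsto
        (fun t : ℝ => (∫ θ, scoreU Y θ t * pathLik Y θ t ∂P) / ∫ θ, pathLik Y θ t ∂P)
        (nhdsWithin (0 : ℝ) (Set.Ioi (0 : ℝ)))
        (nhds ((∫ θ, scoreU Y θ 0 * pathLik Y θ 0 ∂P) / ∫ θ, pathLik Y θ 0 ∂P)) := by
  set M' : ℝ := max M 0 with hM'def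
  have hM' : ∀ᵐ θ ∂P, ∀ t ∈ Set.Icc (0:ℝ) 1, pathLik Y θ t ≤ M' := by
    filter_upwards [hM] with θ h t ht
    exact le_trans (h t ht) (le_max_left _ _)
  -- eventually t ∈ Icc 0 1
  have hev : ∀ᶠ t in nhdsWithin (0:ℝ) (Set.Ioi 0), t ∈ Set.Icc (0:ℝ) 1 := by
    filter_upwards [self_mem_nhdsWithin,
      mem_nhdsWithin_of_mem_nhds (Iic_mem_nhds (by norm_num : (0:ℝ) < 1))] with t h1 h2
    exact ⟨le_of_lt h1, h2⟩
  -- integrability of pathLik at 0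
  have hInt0 : Integrable (fun θ => pathLik Y θ 0) P := by
    refine Integrable.mono' (integrable_const M') (meas_pathLik Y 0).aestronglyMeasurable ?_
    filter_upwards [hM'] with θ h
    rw [Real.norm_eq_abs, abs_of_pos (pathLik_pos Y θ 0)]
    exact h 0 ⟨le_rfl, by norm_num⟩
  have hz0 : 0 < ∫ θ, pathLik Y θ 0 ∂P := by
    rw [integral_pos_iff_support_of_nonneg (fun θ => (pathLik_pos Y θ 0).le) hInt0]
    have : Function.support (fun θ : FactorParam p k n => pathLik Y θ 0) = Set.univ := by
      ext θ; simp [(pathLik_pos Y θ 0).ne']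
    rw [this]
    simp
  refine ⟨hz0, ?_⟩
  have hden : Filter.Tendsto (fun t : ℝ => ∫ θ, pathLik Y θ t ∂P)
      (nhdsWithin 0 (Set.Ioi 0)) (nhds (∫ θ, pathLik Y θ 0 ∂P)) := by
    apply MeasureTheory.continuousWithinAt_of_dominated
      (bound := fun _ => M')
    · filter_upwards with t
      exact (meas_pathLik Y t).aestronglyMeasurable
    · filter_upwards [hev] with t ht
      filter_upwards [hM'] with θ h
      rw [Real.norm_eq_abs, abs_of_pos (pathLik_pos Y θ t)]
      exact h t ht
    · exact integrable_const M'
    · filter_upwards with θ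
      exact (cont_pathLik Y θ).continuousWithinAt
  have hnum : Filter.Tendsto (fun t : ℝ => ∫ θ, scoreU Y θ t * pathLik Y θ t ∂P)
      (nhdsWithin 0 (Set.Ioi 0)) (nhds (∫ θ, scoreU Y θ 0 * pathLik Y θ 0 ∂P)) := by
    apply MeasureTheory.continuousWithinAt_of_dominated
      (bound := fun θ => Qbound Y θ * M')
    · filter_upwards with t
      exact ((meas_scoreU Y t).mul (meas_pathLik Y t)).aestronglyMeasurable
    · filter_upwards [hev] with t ht
      filter_upwards [hM'] with θ h
      rw [Real.norm_eq_abs, abs_mul, abs_of_pos (pathLik_pos Y θ t)]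
      exact mul_le_mul (abs_scoreU_le Y θ ht) (h t ht) (pathLik_pos Y θ t).le
        (Qbound_nonneg Y θ)
    · exact hQ.mul_const M'
    · filter_upwards with θ
      exact ((cont_scoreU Y θ).mul (cont_pathLik Y θ)).continuousWithinAt
  exact hnum.div hden hz0.ne'
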